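/- arXiv:1910.05324 — 2 statements merged into one kernel-verified Lean document; each statement's English description precedes it below -/
import Mathlib

section
/- A dynamical system (X, f) on a compact uniform space is totally topologically chain transitive if and only if it is topologically chain mixing. -/
open Set Filter Function

variable {X : Type*}

/-- An `E`-chain of length `n` from `x` to `y` for the map `f`. -/
def ChainFrom (f : X → X) (E : Set (X × X)) (n : ℕ) (x y : X) : Prop :=
  ∃ c : ℕ → X, c 0 = x ∧ c n = y ∧ ∀ i < n, (f (c i), c (i + 1)) ∈ E

/-- Topological chain transitivity on a uniform space. -/
def ChainTransitive [UniformSpace X] (f : X → X) : Prop :=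
  ∀ E ∈ uniformity X, ∀ x y : X, ∃ n ≥ 1, ChainFrom f E n x y

/-- Lengths of `E`-chains from `x` to itself (loops). -/
def LoopLengths (f : X → X) (E : Set (X × X)) (x : X) : Set ℕ :=
  {n | 1 ≤ n ∧ ChainFrom f E n x x}

/-- `g` is the greatest common divisor of the set `S` of naturals. -/
def IsGcdOfSet (g : ℕ) (S : Set ℕ) : Prop :=
  (∀ n ∈ S, g ∣ n) ∧ ∀ d : ℕ, (∀ n ∈ S, d ∣ n) → d ∣ g

/-- The relation `x ∼_E y`: some `E`-chain from `x` to `y` has length a multiple of `ι`. -/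
def SimE (f : X → X) (E : Set (X × X)) (ι : ℕ) (x y : X) : Prop :=
  ∃ n, ι ∣ n ∧ ChainFrom f E n x y

/-- Topological shadowing property on a uniform space. -/
def Shadowing [UniformSpace X] (f : X → X) : Prop :=
  ∀ E ∈ uniformity X, ∃ D ∈ uniformity X,
    ∀ x : ℕ → X, (∀ i, (f (x i), x (i + 1)) ∈ D) →
      ∃ y, ∀ n, (f^[n] y, x n) ∈ E

/-- Topological chain mixing on a uniform space. -/
def ChainMixing [UniformSpace X] (f : X → X) : Prop :=
  ∀ D ∈ uniformity X, ∀ x y : X, ∃ N ≥ 1, ∀ n ≥ N, ChainFrom f D n x y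

/-- A non-wandering point of `f`. -/
def NonWandering [TopologicalSpace X] (f : X → X) (x : X) : Prop :=
  ∀ V ∈ nhds x, ∃ n ≥ 1, (V ∩ f^[n] ⁻¹' V).Nonempty

/-- Topological transitivity. -/
def TopTransitive [TopologicalSpace X] (f : X → X) : Prop :=
  ∀ U V : Set X, IsOpen U → IsOpen V → U.Nonempty → V.Nonempty →
    ∃ n : ℕ, (U ∩ f^[n] ⁻¹' V).Nonempty

/-- A syndetic set of natural numbers (bounded gaps). -/
def Syndetic (A : Set ℕ) : Prop :=
  ∃ k : ℕ, ∀ n : ℕ, ∃ m, n ≤ m ∧ m ≤ n + k ∧ m ∈ A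

/-- A minimal (almost periodic) point of `f`. -/
def MinimalPt [TopologicalSpace X] (f : X → X) (y : X) : Prop :=
  ∀ V ∈ nhds y, Syndetic {n : ℕ | f^[n] y ∈ V}

/-- Equicontinuity of a dynamical system on a uniform space. -/
def Equicont [UniformSpace X] (f : X → X) : Prop :=
  ∀ E ∈ uniformity X, ∃ D ∈ uniformity X, ∀ n : ℕ, ∀ p ∈ D, (f^[n] p.1, f^[n] p.2) ∈ E

lemma chainFrom_refl (f : X → X) (E : Set (X × X)) (x : X) : ChainFrom f E 0 x x :=
  ⟨fun _ => x, rfl, rfl, fun i hi => absurd hi (by omega)⟩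

lemma ChainFrom.concat {f : X → X} {E : Set (X × X)} {m n : ℕ} {x y z : X}
    (h1 : ChainFrom f E m x y) (h2 : ChainFrom f E n y z) : ChainFrom f E (m + n) x z := by
  obtain ⟨c₁, h10, h1m, h1s⟩ := h1
  obtain ⟨c₂, h20, h2n, h2s⟩ := h2
  refine ⟨fun i => if i < m then c₁ i else c₂ (i - m), ?_, ?_, ?_⟩
  · by_cases h : 0 < m
    · simp [h, h10]
    · have hm : m = 0 := by omega
      subst hm
      simp only [Nat.lt_irrefl, if_false, Nat.sub_zero, h20, ← h1m, h10]
  · have h : ¬ m + n < m := by omega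
    simp [h, Nat.add_sub_cancel_left, h2n]
  · intro i hi
    beta_reduce
    by_cases h1 : i + 1 < m
    · have h0 : i < m := by omega
      simp only [h0, h1, if_true]
      exact h1s i h0
    · by_cases h0 : i < m
      · have he : i + 1 = m := by omega
        have : (if i < m then c₁ i else c₂ (i - m)) = c₁ i := by simp [h0]
        rw [this]
        have : (if i + 1 < m then c₁ (i+1) else c₂ (i + 1 - m)) = c₁ (i+1) := by
          rw [if_neg h1, he, Nat.sub_self, h20, ← h1m]
        rw [this]
        exact h1s i h0
      · have h1' : ¬ i + 1 < m := by omega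
        simp only [h0, h1', if_false]
        have : i + 1 - m = (i - m) + 1 := by omega
        rw [this]
        exact h2s (i - m) (by omega)

/-- Expand a single `f^[a]` step into an `f`-chain of length `a`. -/
lemma chainFrom_of_iterate_step {f : X → X} {D : Set (X × X)} (hrefl : ∀ z : X, (z, z) ∈ D)
    {a : ℕ} (ha : 1 ≤ a) {x y : X} (h : (f^[a] x, y) ∈ D) : ChainFrom f D a x y := by
  refine ⟨fun i => if i < a then f^[i] x else y, by beta_reduce; rw [if_pos (by omega : (0:ℕ) < a)]; simp, by simp, ?_⟩
  intro i hi
  beta_reduce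
  rw [if_pos hi]
  rw [show f (f^[i] x) = f^[i+1] x from (Function.iterate_succ_apply' f i x).symm]
  by_cases h1 : i + 1 < a
  · rw [if_pos h1]
    exact hrefl _
  · have he : i + 1 = a := by omega
    rw [if_neg h1, he]
    exact h

/-- An `f^[a]`-chain of length `m` yields an `f`-chain of length `a * m`. -/
lemma chainFrom_of_iterate {f : X → X} {D : Set (X × X)} (hrefl : ∀ z : X, (z, z) ∈ D)
    {a : ℕ} (ha : 1 ≤ a) : ∀ {m : ℕ} {x y : X},
    ChainFrom (f^[a]) D m x y → ChainFrom f D (a * m) x y := by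
  intro m
  induction m with
  | zero =>
    intro x y h
    obtain ⟨c, h0, hm, _⟩ := h
    have : x = y := by rw [← h0, hm]
    subst this
    simpa using chainFrom_refl f D x
  | succ m ih =>
    intro x y h
    obtain ⟨c, h0, hm, hs⟩ := h
    have hpre : ChainFrom (f^[a]) D m x (c m) := ⟨c, h0, rfl, fun i hi => hs i (by omega)⟩
    have hlast : ChainFrom f D a (c m) y :=
      chainFrom_of_iterate_step hrefl ha (hm ▸ hs m (by omega))
    have := (ih hpre).concat hlast
    rwa [← Nat.mul_succ] at this

/-- Tracking: for each length `k` and entourage `E`, a fine enough entourage `D` ensures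
any `D`-chain of length `k` ends `E`-close to the true orbit. -/
lemma track_lemma [UniformSpace X] {f : X → X} (hf : UniformContinuous f) (k : ℕ) :
    ∀ E ∈ uniformity X, ∃ D ∈ uniformity X, ∀ c : ℕ → X,
      (∀ i < k, (f (c i), c (i + 1)) ∈ D) → (f^[k] (c 0), c k) ∈ E := by
  induction k with
  | zero =>
    intro E hE
    exact ⟨E, hE, fun c _ => refl_mem_uniformity hE⟩
  | succ k ih =>
    intro E hE
    obtain ⟨E', hE', hcomp⟩ := comp_mem_uniformity_sets hE
    have hV : {p : X × X | (f p.1, f p.2) ∈ E'} ∈ uniformity X := hf hE'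
    obtain ⟨D₁, hD₁, hD₁prop⟩ := ih _ hV
    refine ⟨D₁ ∩ E', inter_mem hD₁ hE', fun c hc => ?_⟩
    have h1 : (f (f^[k] (c 0)), f (c k)) ∈ E' :=
      hD₁prop c (fun i hi => (hc i (by omega)).1)
    have h2 : (f (c k), c (k + 1)) ∈ E' := (hc k (by omega)).2
    rw [Function.iterate_succ_apply']
    exact hcomp ⟨f (c k), h1, h2⟩

/-- Coprime representability: every `s ≥ a * b` is `a * i + b * j`. -/
lemma rep_lemma {a b : ℕ} (ha : 1 ≤ a) (hab : Nat.Coprime a b) {s : ℕ} (hs : a * b ≤ s) :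
    ∃ i j, s = a * i + b * j := by
  haveI : NeZero a := ⟨by omega⟩
  set u := ZMod.unitOfCoprime b hab.symm with hu
  set j := (((u⁻¹ : (ZMod a)ˣ) : ZMod a) * (s : ZMod a)).val with hj
  have hjlt : j < a := ZMod.val_lt _
  have hcast : ((j * b : ℕ) : ZMod a) = (s : ZMod a) := by
    push_cast
    rw [hj, ZMod.natCast_val, ZMod.cast_id]
    have hb : (b : ZMod a) = (u : ZMod a) := (ZMod.coe_unitOfCoprime b hab.symm).symm
    rw [hb, mul_right_comm, Units.inv_mul, one_mul]
  have hjb : j * b ≤ s := by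
    have h1 : j * b ≤ (a - 1) * b := Nat.mul_le_mul_right b (by omega)
    have h2 : (a - 1) * b = a * b - b := by rw [Nat.sub_mul, one_mul]
    omega
  have hdvd : a ∣ s - j * b := by
    have := (ZMod.natCast_eq_natCast_iff (j * b) s a).mp hcast
    exact (Nat.modEq_iff_dvd' hjb).mp this
  obtain ⟨i, hi⟩ := hdvd
  refine ⟨i, j, ?_⟩
  rw [mul_comm b j]
  omega

theorem totally_chain_transitive_iff_chain_mixing [UniformSpace X] [CompactSpace X]
    (f : X → X) (hf : UniformContinuous f) :
    (∀ n : ℕ, 1 ≤ n → ChainTransitive (f^[n])) ↔ ChainMixing f := by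
  constructor
  · -- totally chain transitive → chain mixing
    intro hT D hD x y
    have hrefl : ∀ z : X, (z, z) ∈ D := fun z => refl_mem_uniformity hD
    have h1 : ChainTransitive f := by
      have h := hT 1 le_rfl
      rwa [Function.iterate_one] at h
    -- a loop at x of length a
    obtain ⟨a, ha1, hloopa⟩ := h1 D hD x x
    -- a loop at x of length b = 1 + a * m, coprime to a
    obtain ⟨m, hm1, hchain⟩ := hT a ha1 D hD (f x) x
    have hloopfx : ChainFrom f D (a * m) (f x) x := chainFrom_of_iterate hrefl ha1 hchain
    have hstep1 : ChainFrom f D 1 x (f x) := by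
      refine ⟨fun i => if i = 0 then x else f x, by simp, by simp, ?_⟩
      intro i hi
      have : i = 0 := by omega
      subst this
      simpa using hrefl (f x)
    have hloopb : ChainFrom f D (1 + a * m) x x := hstep1.concat hloopfx
    set b := 1 + a * m with hb
    have hb1 : 1 ≤ b := by omega
    have hab : Nat.Coprime a b := by
      have : Nat.gcd a (1 + a * m) = Nat.gcd a 1 := Nat.gcd_add_mul_left_right a 1 m
      simp only [Nat.Coprime, hb, Nat.gcd_one_right] at this ⊢; exact this
    -- a chain from x to y of length L
    obtain ⟨L, hL1, hchainxy⟩ := h1 D hD x y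
    -- loops of any combined length
    have hmula : ∀ i, ChainFrom f D (a * i) x x := by
      intro i
      induction i with
      | zero => simpa using chainFrom_refl f D x
      | succ i ih =>
        have := ih.concat hloopa
        rwa [← Nat.mul_succ] at this
    have hmulb : ∀ j, ChainFrom f D (b * j) x x := by
      intro j
      induction j with
      | zero => simpa using chainFrom_refl f D x
      | succ j ih =>
        have := ih.concat hloopb
        rwa [← Nat.mul_succ] at this
    refine ⟨a * b + L, by omega, ?_⟩
    intro n hn
    obtain ⟨i, j, hij⟩ := rep_lemma ha1 hab (show a * b ≤ n - L by omega)
    have hloop : ChainFrom f D (a * i + b * j) x x := (hmula i).concat (hmulb j)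
    have := hloop.concat hchainxy
    have hlen : a * i + b * j + L = n := by omega
    rwa [hlen] at this
  · -- chain mixing → totally chain transitive
    intro hM n hn E hE x y
    obtain ⟨D, hD, hDtrack⟩ := track_lemma hf n E hE
    obtain ⟨N, hN1, hNchain⟩ := hM D hD x y
    set m := max N 1 with hm
    have hnm : N ≤ n * m := le_trans (le_max_left N 1)
      (Nat.le_mul_of_pos_left m (by omega))
    obtain ⟨c, hc0, hcend, hcs⟩ := hNchain (n * m) hnm
    refine ⟨m, le_max_right N 1, fun i => c (n * i), by simpa using hc0, by simpa using hcend, ?_⟩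
    intro i hi
    have hseg : ∀ j < n, (f ((fun j => c (n * i + j)) j), (fun j => c (n * i + j)) (j + 1)) ∈ D := by
      intro j hj
      beta_reduce
      have h1 : n * i + j < n * m := by
        calc n * i + j < n * i + n := by omega
        _ = n * (i + 1) := by ring
        _ ≤ n * m := Nat.mul_le_mul_left n (by omega)
      have := hcs (n * i + j) h1
      rwa [show n * i + j + 1 = n * i + (j + 1) by omega] at this
    have := hDtrack (fun j => c (n * i + j)) hseg
    beta_reduce
    simpa [Nat.mul_succ] using this
end

section
/- Let (X, f) be a dynamical system on a connected compact uniform space. Then the following are equivalent: (1) f is topologically chain recurrent; (2) f is topologically chain transitive; (3) f is totally topologically chain transitive; (4) f is topologically chain mixing. -/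
open Set Filter Function

variable {X : Type*}

private lemma chain_mono {f : X → X} {E E' : Set (X × X)} (h : E ⊆ E') {n : ℕ} {x y : X}
    (hc : ChainFrom f E n x y) : ChainFrom f E' n x y := by
  obtain ⟨c, h0, hn, hs⟩ := hc
  exact ⟨c, h0, hn, fun i hi => h (hs i hi)⟩

private lemma chain_concat {f : X → X} {E : Set (X × X)} {n m : ℕ} {x y z : X}
    (h1 : ChainFrom f E n x y) (h2 : ChainFrom f E m y z) :
    ChainFrom f E (n + m) x z := by
  obtain ⟨c, hc0, hcn, hcs⟩ := h1
  obtain ⟨d, hd0, hdm, hds⟩ := h2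
  refine ⟨fun i => if i < n then c i else d (i - n), ?_, ?_, ?_⟩
  · by_cases h : 0 < n
    · simp [h, hc0]
    · have hn0 : n = 0 := by omega
      simp [hn0, hd0, ← hcn, hn0, hc0]
  · have : ¬ (n + m < n) := by omega
    simp only [this, if_false]
    rw [Nat.add_sub_cancel_left]; exact hdm
  · intro i hi
    by_cases h : i < n
    · by_cases h' : i + 1 < n
      · simpa [h, h'] using hcs i h
      · have hin : i + 1 = n := by omega
        have := hcs i h
        rw [hin] at this
        simp only [h, if_pos, h', if_false, hin, Nat.sub_self, lt_irrefl]
        rw [hd0, ← hcn]; exact this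
    · have h' : ¬ (i + 1 < n) := by omega
      have hsub : i + 1 - n = (i - n) + 1 := by omega
      simp only [h, h', if_false, hsub]
      exact hds (i - n) (by omega)

private lemma chain_orbit [UniformSpace X] {f : X → X} {E : Set (X × X)}
    (hE : E ∈ uniformity X) (n : ℕ) (x : X) : ChainFrom f E n x (f^[n] x) := by
  refine ⟨fun i => f^[i] x, by simp, rfl, fun i _ => ?_⟩
  show (f (f^[i] x), f^[i+1] x) ∈ E
  rw [Function.iterate_succ_apply']
  exact refl_mem_uniformity hE

private lemma chain_last {f : X → X} {E : Set (X × X)} {n : ℕ} {x y : X}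
    (hn : 1 ≤ n) (hc : ChainFrom f E n x y) :
    ∃ w, (f w, y) ∈ E ∧ ∀ z, (f w, z) ∈ E → ChainFrom f E n x z := by
  obtain ⟨c, h0, hN, hs⟩ := hc
  refine ⟨c (n - 1), ?_, ?_⟩
  · have := hs (n - 1) (by omega)
    rwa [Nat.sub_add_cancel hn, hN] at this
  · intro z hz
    refine ⟨Function.update c n z, ?_, by simp, ?_⟩
    · rw [Function.update_of_ne (by omega : (0:ℕ) ≠ n)]; exact h0
    · intro i hi
      rw [Function.update_of_ne (by omega : i ≠ n)]
      by_cases h : i + 1 = n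
      · rw [h, Function.update_self]
        have hi' : i = n - 1 := by omega
        rw [hi']; exact hz
      · rw [Function.update_of_ne h]
        exact hs i hi

private lemma chain_first {f : X → X} {E : Set (X × X)} {n : ℕ} {x y : X}
    (hn : 1 ≤ n) (hc : ChainFrom f E n x y) :
    ∃ w, (f x, w) ∈ E ∧ ∀ x', (f x', w) ∈ E → ChainFrom f E n x' y := by
  obtain ⟨c, h0, hN, hs⟩ := hc
  refine ⟨c 1, ?_, ?_⟩
  · have := hs 0 (by omega)
    rwa [h0] at this
  · intro x' hx'
    refine ⟨Function.update c 0 x', Function.update_self 0 x' c, ?_, ?_⟩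
    · rw [Function.update_of_ne (by omega : n ≠ 0)]; exact hN
    · intro i hi
      rw [Function.update_of_ne (by omega : i + 1 ≠ 0)]
      by_cases h : i = 0
      · rw [h, Function.update_self]; simpa [h] using hx'
      · rw [Function.update_of_ne h]
        exact hs i hi


private lemma multiples_mem {S : Set ℕ} (hadd : ∀ s ∈ S, ∀ t ∈ S, s + t ∈ S)
    {a : ℕ} (ha : a ∈ S) : ∀ k, 1 ≤ k → k * a ∈ S := by
  intro k hk
  induction k with
  | zero => omega
  | succ k ih =>
    by_cases h : k = 0
    · subst h; simpa using ha
    · have := hadd _ (ih (by omega)) _ ha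
      simpa [Nat.succ_mul] using this

private lemma add_closed_cofinite {S : Set ℕ}
    (hadd : ∀ s ∈ S, ∀ t ∈ S, s + t ∈ S)
    (hmem : ∃ a ∈ S, 1 ≤ a)
    (hgcd : ∀ d, 2 ≤ d → ∃ s ∈ S, ¬ d ∣ s) :
    ∃ N, ∀ n, N ≤ n → n ∈ S := by
  obtain ⟨a, haS, ha1⟩ := hmem
  have key : ∀ g, 1 ≤ g → (∃ N, ∀ n, N ≤ n → g ∣ n → n ∈ S) →
      ∃ N, ∀ n, N ≤ n → n ∈ S := by
    intro g
    induction g using Nat.strong_induction_on with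
    | _ g ih =>
      rintro hg1 ⟨N, hN⟩
      rcases eq_or_lt_of_le hg1 with h1 | h2
      · exact ⟨max N 1, fun n hn =>
          hN n (le_trans (le_max_left _ _) hn) (by rw [← h1]; exact one_dvd n)⟩
      · obtain ⟨s, hsS, hsd⟩ := hgcd g h2
        have hs1 : 1 ≤ s := by
          rcases Nat.eq_zero_or_pos s with h | h
          · exact absurd (h ▸ dvd_zero g) hsd
          · exact h
        have hg'g : Nat.gcd g s ∣ g := Nat.gcd_dvd_left g s
        have hg's : Nat.gcd g s ∣ s := Nat.gcd_dvd_right g s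
        have hg'1 : 1 ≤ Nat.gcd g s := Nat.gcd_pos_of_pos_left s (by omega)
        have hg'lt : Nat.gcd g s < g := by
          rcases lt_or_eq_of_le (Nat.le_of_dvd (by omega) hg'g) with h | h
          · exact h
          · exact absurd (h ▸ hg's) hsd
        refine ih _ hg'lt hg'1 ⟨N + g * s, fun n hn hdvd => ?_⟩
        obtain ⟨k, hk_lt, hkcong⟩ : ∃ k : ℕ, k < g ∧ (g : ℤ) ∣ (n : ℤ) - k * s := by
          obtain ⟨t, ht⟩ := hdvd
          have hbez : (Nat.gcd g s : ℤ) = g * Nat.gcdA g s + s * Nat.gcdB g s :=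
            Nat.gcd_eq_gcd_ab g s
          set B : ℤ := Nat.gcdB g s with hB
          set A : ℤ := Nat.gcdA g s with hA
          have hgpos : (0:ℤ) < (g:ℤ) := by exact_mod_cast (by omega : 0 < g)
          set k0 : ℤ := (t * B) % (g:ℤ) with hk0
          have hk0nonneg : 0 ≤ k0 := Int.emod_nonneg _ (by positivity)
          have hk0lt : k0 < (g:ℤ) := Int.emod_lt_of_pos _ hgpos
          refine ⟨k0.toNat, ?_, ?_⟩
          · have : (k0.toNat : ℤ) < (g:ℤ) := by rwa [Int.toNat_of_nonneg hk0nonneg]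
            exact_mod_cast this
          · -- n = t * gcd; n - k0*s = (n - t*B*s) + (t*B - k0)*s, both div by g
            have h1 : (g:ℤ) ∣ (n:ℤ) - (t * B) * s := by
              have hnt : (n:ℤ) = ((g:ℤ) * A + (s:ℤ) * B) * t := by
                rw [← hbez]; exact_mod_cast ht
              refine ⟨A * t, by rw [hnt]; ring⟩
            have h2 : (g:ℤ) ∣ (t * B) - k0 := by
              rw [hk0, Int.emod_def]
              exact ⟨t * B / g, by ring⟩
            have h3 : (g:ℤ) ∣ ((n:ℤ) - (t*B)*s) + ((t*B) - k0) * s := by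
              exact dvd_add h1 (Dvd.dvd.mul_right h2 s)
            have heq : ((n:ℤ) - (t*B)*s) + ((t*B) - k0) * s = (n:ℤ) - k0 * s := by ring
            rw [heq] at h3
            rwa [Int.toNat_of_nonneg hk0nonneg]
        have hks_le : k * s ≤ n := by
          have : k * s ≤ g * s := Nat.mul_le_mul_right s (by omega)
          omega
        have hsub_ge : N ≤ n - k * s := by
          have : k * s ≤ g * s := Nat.mul_le_mul_right s (by omega)
          omega
        have hdvd' : g ∣ n - k * s := by
          have : ((n - k * s : ℕ) : ℤ) = (n:ℤ) - k * s := by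
            push_cast [Nat.cast_sub hks_le]; ring
          have h4 : (g:ℤ) ∣ ((n - k*s : ℕ) : ℤ) := by rw [this]; exact hkcong
          exact_mod_cast h4
        by_cases hk0 : k = 0
        · subst hk0
          simpa using hN n (by omega) (by simpa using hdvd')
        · have hm : n - k * s ∈ S := hN _ hsub_ge hdvd'
          have hks : k * s ∈ S := multiples_mem hadd hsS k (by omega)
          have := hadd _ hm _ hks
          rwa [Nat.sub_add_cancel hks_le] at this
  refine key a ha1 ⟨1, fun n hn hdvd => ?_⟩
  obtain ⟨k, hk⟩ := hdvd
  have hk1 : 1 ≤ k := by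
    rcases Nat.eq_zero_or_pos k with h | h
    · subst h; simp at hk; omega
    · exact h
  rw [hk, Nat.mul_comm a k]
  exact multiples_mem hadd haS k hk1


private lemma chain_comp [UniformSpace X] {f : X → X} (hf : UniformContinuous f) :
    ∀ (m : ℕ) (E : Set (X × X)), E ∈ uniformity X →
    ∃ D ∈ uniformity X, D ⊆ E ∧ ∀ a b : X, ChainFrom f D m a b → (f^[m] a, b) ∈ E := by
  intro m
  induction m with
  | zero =>
    intro E hE
    refine ⟨E, hE, subset_rfl, ?_⟩
    rintro a b ⟨c, h0, hn, _⟩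
    rw [Function.iterate_zero_apply, ← h0, ← hn]
    exact refl_mem_uniformity hE
  | succ m ih =>
    intro E hE
    obtain ⟨E', hE'u, hE'c⟩ := comp_mem_uniformity_sets hE
    have hF : (fun p : X × X => (f p.1, f p.2)) ⁻¹' E' ∈ uniformity X := hf hE'u
    obtain ⟨D0, hD0u, hD0F, hD0p⟩ := ih _ hF
    refine ⟨D0 ∩ E' ∩ E, inter_mem (inter_mem hD0u hE'u) hE, inter_subset_right, ?_⟩
    rintro a b ⟨c, h0, hn, hs⟩
    have hsub : ChainFrom f D0 m a (c m) :=
      ⟨c, h0, rfl, fun i hi => (hs i (by omega)).1.1⟩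
    have h1 : (f (f^[m] a), f (c m)) ∈ E' := hD0p a (c m) hsub
    have h2 : (f (c m), b) ∈ E' := by
      have := (hs m (by omega)).1.2
      rwa [hn] at this
    rw [Function.iterate_succ_apply']
    exact hE'c (SetRel.prodMk_mem_comp h1 h2)

theorem chain_properties_tfae [UniformSpace X] [CompactSpace X] [ConnectedSpace X]
    (f : X → X) (hf : UniformContinuous f) :
    List.TFAE
      [∀ E ∈ uniformity X, ∀ x : X, ∃ n ≥ 1, ChainFrom f E n x x,
       ChainTransitive f,
       ∀ n : ℕ, 1 ≤ n → ChainTransitive (f^[n]),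
       ChainMixing f] := by
  tfae_have 1 → 2
  | h1 => by
    intro E hE x y
    obtain ⟨E', ⟨hE'u, hE'o⟩, hE'E⟩ := uniformity_hasBasis_open.mem_iff.mp hE
    set A := {z | ∃ n ≥ 1, ChainFrom f E' n x z} with hA
    have hopen : IsOpen A := by
      rw [isOpen_iff_forall_mem_open]
      rintro z ⟨n, hn, hc⟩
      obtain ⟨w, hw, hrep⟩ := chain_last hn hc
      refine ⟨{u | (f w, u) ∈ E'}, fun u hu => ⟨n, hn, hrep u hu⟩, ?_, hw⟩
      exact hE'o.preimage (Continuous.prodMk_right (f w))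
    have hclosed : IsClosed A := by
      rw [← isOpen_compl_iff, isOpen_iff_forall_mem_open]
      intro z hz
      obtain ⟨m, hm, hloop⟩ := h1 E' hE'u z
      obtain ⟨w, hw, hrep⟩ := chain_first hm hloop
      refine ⟨{u | (f u, w) ∈ E'}, ?_, ?_, hw⟩
      · intro u hu hcontra
        obtain ⟨n, hn, hcn⟩ := hcontra
        exact hz ⟨n + m, by omega, chain_concat hcn (hrep u hu)⟩
      · exact hE'o.preimage ((hf.continuous).prodMk continuous_const)
    have hAuniv : A = univ := by
      refine IsClopen.eq_univ ⟨hclosed, hopen⟩ ⟨x, ?_⟩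
      obtain ⟨n, hn, hc⟩ := h1 E' hE'u x
      exact ⟨n, hn, hc⟩
    have hy : y ∈ A := hAuniv ▸ mem_univ y
    obtain ⟨n, hn, hc⟩ := hy
    exact ⟨n, hn, chain_mono hE'E hc⟩
  tfae_have 2 → 4
  | h2 => by
    intro D hD x y
    obtain ⟨E, ⟨hEu, hEo⟩, hED⟩ := uniformity_hasBasis_open.mem_iff.mp hD
    have hS : ∃ N0, ∀ n, N0 ≤ n → n ∈ LoopLengths f E x := by
      apply add_closed_cofinite
      · rintro s ⟨hs1, hsc⟩ t ⟨ht1, htc⟩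
        exact ⟨by omega, chain_concat hsc htc⟩
      · obtain ⟨n, hn, hc⟩ := h2 E hEu x x
        exact ⟨n, ⟨hn, hc⟩, hn⟩
      · intro d hd
        by_contra hcon
        push_neg at hcon
        set C : ℕ → Set X := fun r => {z | ∃ n, 1 ≤ n ∧ n % d = r ∧ ChainFrom f E n x z}
          with hCdef
        have hdisj : ∀ z r r', z ∈ C r → z ∈ C r' → r = r' := by
          rintro z r r' ⟨n, hn1, hnr, hnc⟩ ⟨n', hn'1, hn'r, hn'c⟩
          obtain ⟨m', hm'1, hm'c⟩ := h2 E hEu z x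
          have l1 : d ∣ n + m' := hcon _ ⟨by omega, chain_concat hnc hm'c⟩
          have l2 : d ∣ n' + m' := hcon _ ⟨by omega, chain_concat hn'c hm'c⟩
          have hmeq : n ≡ n' [MOD d] := by
            refine Nat.ModEq.add_right_cancel' m' ?_
            exact (Nat.modEq_zero_iff_dvd.mpr l1).trans (Nat.modEq_zero_iff_dvd.mpr l2).symm
          rw [← hnr, ← hn'r]
          exact hmeq
        have hcover : ∀ z, ∃ r, r < d ∧ z ∈ C r := by
          intro z
          obtain ⟨n, hn1, hc⟩ := h2 E hEu x z
          exact ⟨n % d, Nat.mod_lt _ (by omega), n, hn1, rfl, hc⟩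
        have hopenC : ∀ r, IsOpen (C r) := by
          intro r
          rw [isOpen_iff_forall_mem_open]
          rintro z ⟨n, hn1, hnr, hnc⟩
          obtain ⟨w, hw, hrep⟩ := chain_last hn1 hnc
          refine ⟨{u | (f w, u) ∈ E}, fun u hu => ⟨n, hn1, hnr, hrep u hu⟩, ?_, hw⟩
          exact hEo.preimage (Continuous.prodMk_right (f w))
        have hclopen : IsClopen (C 0) := by
          refine ⟨?_, hopenC 0⟩
          rw [← isOpen_compl_iff]
          have hcompl : (C 0)ᶜ = ⋃ r ∈ Set.Ioo 0 d, C r := by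
            ext z
            constructor
            · intro hz
              obtain ⟨r, hrd, hzr⟩ := hcover z
              have hr0 : r ≠ 0 := fun h => hz (h ▸ hzr)
              exact mem_biUnion (⟨by omega, hrd⟩ : r ∈ Set.Ioo 0 d) hzr
            · intro hz hz0
              simp only [mem_iUnion] at hz
              obtain ⟨r, hr, hzr⟩ := hz
              have := hdisj z r 0 hzr hz0
              exact absurd this (by have := hr.1; omega)
          rw [hcompl]
          exact isOpen_biUnion fun r _ => hopenC r
        have h0mem : (f^[d] x) ∈ C 0 :=
          ⟨d, by omega, Nat.mod_self d, chain_orbit hEu d x⟩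
        have hC0univ : C 0 = univ := IsClopen.eq_univ hclopen ⟨_, h0mem⟩
        have h1mem : (f^[d+1] x) ∈ C 1 :=
          ⟨d + 1, by omega, by rw [Nat.add_mod_left]; exact Nat.mod_eq_of_lt (by omega),
            chain_orbit hEu (d+1) x⟩
        have h1mem0 : (f^[d+1] x) ∈ C 0 := hC0univ ▸ mem_univ _
        exact absurd (hdisj _ 1 0 h1mem h1mem0) (by omega)
    obtain ⟨N0, hN0⟩ := hS
    obtain ⟨m, hm1, hmc⟩ := h2 E hEu x y
    refine ⟨N0 + m + 1, by omega, fun n hn => ?_⟩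
    obtain ⟨_, hloop⟩ := hN0 (n - m) (by omega)
    have hcat := chain_concat hloop hmc
    rw [show n - m + m = n by omega] at hcat
    exact chain_mono hED hcat
  tfae_have 4 → 3
  | h4 => by
    intro m hm E hE x y
    obtain ⟨D, hDu, _, hDp⟩ := chain_comp hf m E hE
    obtain ⟨N, hN1, hNc⟩ := h4 D hDu x y
    refine ⟨N, hN1, ?_⟩
    obtain ⟨c, h0, hn, hs⟩ := hNc (m * N) (Nat.le_mul_of_pos_left N (by omega))
    refine ⟨fun j => c (m * j), by simpa using h0, hn, ?_⟩
    intro j hj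
    apply hDp
    refine ⟨fun i => c (m * j + i), by simp, ?_, ?_⟩
    · show c (m * j + m) = c (m * (j + 1))
      rw [Nat.mul_succ]
    · intro i hi
      have hlt : m * j + i < m * N := by
        have h1 : m * (j + 1) ≤ m * N := Nat.mul_le_mul_left m (by omega)
        have h2 : m * (j + 1) = m * j + m := Nat.mul_succ m j
        omega
      have := hs (m * j + i) hlt
      simpa [Nat.add_assoc] using this
  tfae_have 3 → 1
  | h3 => by
    intro E hE x
    have := h3 1 le_rfl E hE x x
    simpa [Function.iterate_one] using this
  tfae_finish
end
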